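/- Let f : (ℤ/rℤ)^n → (ℤ/rℤ)^{n+1} be the linear map sending e_i to e_i - e_{i-1} (coordinates of the target indexed 0,...,n). Then f is injective and intertwines the permutation action of B_n on (ℤ/rℤ)^n with the action on (ℤ/rℤ)^{n+1} given by the matrices M(β) from the virtual undercrossing homomorphism Υ_r; moreover f ∘ φ_r = v, where v(β) is the translation part of Υ_r(β). Consequently ker(φ_r) = ker(v). -/

import Mathlib

/-- The braid relations on `m` generators `σ_1, ..., σ_m` (indexed here by `Fin m`):
`σ i σ j = σ j σ i` for `|i - j| ≥ 2` and `σ i σ (i+1) σ i = σ (i+1) σ i σ (i+1)`. -/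
def braidRels (m : ℕ) : Set (FreeGroup (Fin m)) :=
  { w | (∃ i j : Fin m, (i : ℕ) + 2 ≤ (j : ℕ) ∧
          w = FreeGroup.of i * FreeGroup.of j * (FreeGroup.of i)⁻¹ * (FreeGroup.of j)⁻¹) ∨
        (∃ i j : Fin m, (i : ℕ) + 1 = (j : ℕ) ∧
          w = FreeGroup.of i * FreeGroup.of j * FreeGroup.of i *
              (FreeGroup.of j * FreeGroup.of i * FreeGroup.of j)⁻¹) }

/-- The braid group on `m + 1` strands, presented with `m` Artin generators.
`BraidGroup (n-1)` is the braid group `B_n`. -/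
abbrev BraidGroup (m : ℕ) : Type := PresentedGroup (braidRels m)

/-- The `k`-th Artin generator (`0`-indexed: `braidGen k` is the Artin generator
`σ_{k+1}` of the paper, braiding strands `k` and `k+1` in `0`-indexed numbering);
junk value `1` if `k` is out of range. -/
def braidGen {m : ℕ} (k : ℕ) : BraidGroup m :=
  if h : k < m then PresentedGroup.of (⟨k, h⟩ : Fin m) else 1

/-- The matrix `P_i` of the virtual undercrossing map: the identity `(n+1)×(n+1)` matrix
over `ℤ/rℤ` (coordinates indexed `0, ..., n`) with column `k+1` (the paper's `i = k+1`,
for the `0`-indexed generator `k`) replaced by `e_k - e_{k+1} + e_{k+2}`; identity if `k`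
is out of range. -/
def Pmat (n r : ℕ) (k : ℕ) : Matrix (Fin (n + 1)) (Fin (n + 1)) (ZMod r) :=
  Matrix.of fun s t =>
    if h : k + 1 < n then
      if t = (⟨k + 1, by omega⟩ : Fin (n + 1)) then
        (if s = (⟨k, by omega⟩ : Fin (n + 1)) then 1
         else if s = (⟨k + 1, by omega⟩ : Fin (n + 1)) then -1
         else if s = (⟨k + 2, by omega⟩ : Fin (n + 1)) then 1 else 0)
      else if s = t then 1 else 0
    else if s = t then 1 else 0

/-- The translation part `e_{i+1} - e_i` of the virtual undercrossing map on the
`0`-indexed generator `k` (the paper's `σ_i` with `i = k+1`): `e_{k+2} - e_{k+1}`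
in `(ℤ/rℤ)^{n+1}`; zero if `k` is out of range. -/
def vvec (n r : ℕ) (k : ℕ) : Fin (n + 1) → ZMod r :=
  if h : k + 1 < n then
    Pi.single (⟨k + 2, by omega⟩ : Fin (n + 1)) 1 -
      Pi.single (⟨k + 1, by omega⟩ : Fin (n + 1)) 1
  else 0

/-- The linear map `f : (ℤ/rℤ)ⁿ → (ℤ/rℤ)^{n+1}` sending the basis vector `e_k`
(`0`-indexed source) to `e_{k+1} - e_k` (target coordinates indexed `0, ..., n`),
i.e. `(f x) t = x (t-1) - x t` with out-of-range values read as `0`. -/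
def Fmap (n r : ℕ) (x : Fin n → ZMod r) : Fin (n + 1) → ZMod r := fun t =>
  (if h : 1 ≤ (t : ℕ) then x ⟨(t : ℕ) - 1, by have := t.isLt; omega⟩ else 0) -
    (if h : (t : ℕ) < n then x ⟨(t : ℕ), h⟩ else 0)

namespace S14

@[ext] structure SDP (n r : ℕ) where
  p : Equiv.Perm (Fin n)
  a : Fin n → ZMod r

namespace SDP

variable {n r : ℕ}

instance : Mul (SDP n r) := ⟨fun x y => ⟨x.p * y.p, x.a + fun t => y.a (x.p⁻¹ t)⟩⟩
instance : One (SDP n r) := ⟨⟨1, 0⟩⟩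
instance : Inv (SDP n r) := ⟨fun x => ⟨x.p⁻¹, fun t => -(x.a (x.p t))⟩⟩

@[simp] lemma mul_p (x y : SDP n r) : (x * y).p = x.p * y.p := rfl
@[simp] lemma mul_a (x y : SDP n r) : (x * y).a = x.a + fun t => y.a (x.p⁻¹ t) := rfl
@[simp] lemma one_p : (1 : SDP n r).p = 1 := rfl
@[simp] lemma one_a : (1 : SDP n r).a = 0 := rfl
@[simp] lemma inv_p (x : SDP n r) : x⁻¹.p = x.p⁻¹ := rfl
@[simp] lemma inv_a (x : SDP n r) : x⁻¹.a = fun t => -(x.a (x.p t)) := rfl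

instance : Group (SDP n r) where
  mul_assoc x y z := by
    refine SDP.ext (mul_assoc _ _ _) ?_
    funext t
    simp [mul_inv_rev, add_assoc]
  one_mul x := by
    refine SDP.ext (one_mul _) ?_
    funext t; simp
  mul_one x := by
    refine SDP.ext (mul_one _) ?_
    funext t; simp
  inv_mul_cancel x := by
    refine SDP.ext (inv_mul_cancel _) ?_
    funext t; simp

def projP (n r : ℕ) : SDP n r →* Equiv.Perm (Fin n) where
  toFun := SDP.p
  map_one' := rfl
  map_mul' _ _ := rfl

end SDP

variable (n r : ℕ)

/-- the image of the `k`-th braid generator in the semidirect product -/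
def sgen (k : ℕ) : SDP n r :=
  if h : k + 1 < n then
    ⟨Equiv.swap ⟨k, Nat.lt_of_succ_lt h⟩ ⟨k + 1, h⟩, Pi.single (⟨k + 1, h⟩ : Fin n) 1⟩
  else 1

lemma swap_commute {α : Type*} [DecidableEq α] {a b c d : α} (h1 : a ≠ c) (h2 : a ≠ d)
    (h3 : b ≠ c) (h4 : b ≠ d) :
    Equiv.swap a b * Equiv.swap c d = Equiv.swap c d * Equiv.swap a b := by
  ext t
  simp only [Equiv.Perm.mul_apply, Equiv.swap_apply_def]
  split_ifs <;> simp_all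

lemma swap_braid {α : Type*} [DecidableEq α] {a b c : α} (hab : a ≠ b) (hac : a ≠ c)
    (hbc : b ≠ c) :
    Equiv.swap a b * Equiv.swap b c * Equiv.swap a b =
      Equiv.swap b c * Equiv.swap a b * Equiv.swap b c := by
  have h1 := Equiv.swap_mul_swap_mul_swap hbc.symm hac.symm
  have h2 := Equiv.swap_mul_swap_mul_swap hab hac
  rw [Equiv.swap_comm b a, Equiv.swap_comm c b] at h1
  rw [h2, Equiv.swap_comm c a, ← h1]

lemma sgen_comm (i j : ℕ) (hij : i + 2 ≤ j) (hj : j + 1 < n) :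
    sgen n r i * sgen n r j = sgen n r j * sgen n r i := by
  have hi : i + 1 < n := by omega
  rw [sgen, sgen, dif_pos hi, dif_pos hj]
  refine SDP.ext ?_ ?_
  · exact swap_commute (Fin.ne_of_val_ne (by show i ≠ j; omega))
      (Fin.ne_of_val_ne (by show i ≠ j + 1; omega))
      (Fin.ne_of_val_ne (by show i + 1 ≠ j; omega))
      (Fin.ne_of_val_ne (by show i + 1 ≠ j + 1; omega))
  · funext t
    simp only [SDP.mul_a, Pi.add_apply, Equiv.swap_inv, Pi.single_apply,
      Equiv.swap_apply_def, Fin.ext_iff, apply_ite Fin.val]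
    split_ifs <;> first | (exfalso; omega) | ring

lemma sgen_braid (i : ℕ) (h : i + 2 < n) :
    sgen n r i * sgen n r (i + 1) * sgen n r i =
      sgen n r (i + 1) * sgen n r i * sgen n r (i + 1) := by
  have hi : i + 1 < n := by omega
  rw [sgen, sgen, dif_pos hi, dif_pos (show i + 1 + 1 < n by omega)]
  refine SDP.ext ?_ ?_
  · show (Equiv.swap _ _ * Equiv.swap _ _) * Equiv.swap _ _
        = (Equiv.swap _ _ * Equiv.swap _ _) * Equiv.swap _ _
    have := swap_braid (a := (⟨i, by omega⟩ : Fin n)) (b := ⟨i + 1, by omega⟩)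
      (c := ⟨i + 2, by omega⟩) (Fin.ne_of_val_ne (by show i ≠ i + 1; omega))
      (Fin.ne_of_val_ne (by show i ≠ i + 2; omega))
      (Fin.ne_of_val_ne (by show i + 1 ≠ i + 2; omega))
    convert this using 3
  · funext t
    simp only [SDP.mul_a, SDP.mul_p, Pi.add_apply, mul_inv_rev, Equiv.swap_inv,
      Equiv.Perm.mul_apply, Pi.single_apply, Equiv.swap_apply_def, Fin.ext_iff,
      apply_ite Fin.val]
    split_ifs <;> first | (exfalso; omega) | ring

def genF : Fin (n - 1) → SDP n r := fun i => sgen n r i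

lemma relsat : ∀ w ∈ braidRels (n - 1), FreeGroup.lift (genF n r) w = 1 := by
  intro w hw
  rcases hw with ⟨i, j, hij, rfl⟩ | ⟨i, j, hij, rfl⟩
  · simp only [map_mul, map_inv, FreeGroup.lift_apply_of]
    have hj : (j : ℕ) + 1 < n := by have := j.isLt; omega
    have key := sgen_comm n r i j hij hj
    rw [show genF n r i * genF n r j * (genF n r i)⁻¹ * (genF n r j)⁻¹
        = (genF n r i * genF n r j) * (genF n r j * genF n r i)⁻¹ by group]
    show (sgen n r i * sgen n r j) * (sgen n r j * sgen n r i)⁻¹ = 1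
    rw [key, mul_inv_cancel]
  · simp only [map_mul, map_inv, FreeGroup.lift_apply_of]
    have hj : (i : ℕ) + 2 < n := by have := j.isLt; omega
    have key := sgen_braid n r i hj
    rw [mul_inv_eq_one]
    show sgen n r i * sgen n r j * sgen n r i = sgen n r j * sgen n r i * sgen n r j
    rw [show ((j : ℕ)) = (i : ℕ) + 1 from hij.symm]
    exact key

def Theta : BraidGroup (n - 1) →* SDP n r := PresentedGroup.toGroup (relsat n r)

lemma Theta_gen (k : ℕ) (hk : k + 1 < n) : Theta n r (braidGen k) = sgen n r k := by
  rw [braidGen, dif_pos (show k < n - 1 by omega)]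
  exact PresentedGroup.toGroup.of _


lemma Fmap_add (x y : Fin n → ZMod r) : Fmap n r (x + y) = Fmap n r x + Fmap n r y := by
  funext t
  simp only [Fmap, Pi.add_apply]
  split_ifs <;> ring

lemma Fmap_smul (c : ZMod r) (x : Fin n → ZMod r) : Fmap n r (c • x) = c • Fmap n r x := by
  funext t
  simp only [Fmap, Pi.smul_apply, smul_eq_mul]
  split_ifs <;> ring

lemma Fmap_zero : Fmap n r 0 = 0 := by
  funext t
  simp only [Fmap, Pi.zero_apply]
  split_ifs <;> ring

lemma Fmap_sub (x y : Fin n → ZMod r) : Fmap n r (x - y) = Fmap n r x - Fmap n r y := by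
  funext t
  simp only [Fmap, Pi.sub_apply]
  split_ifs <;> ring

/-- `Fmap` as a linear map. -/
def FmapL : (Fin n → ZMod r) →ₗ[ZMod r] (Fin (n + 1) → ZMod r) where
  toFun := Fmap n r
  map_add' := Fmap_add n r
  map_smul' := Fmap_smul n r

lemma Fmap_single (j : Fin n) (c : ZMod r) :
    Fmap n r (Pi.single j c) =
      Pi.single (⟨(j : ℕ) + 1, by omega⟩ : Fin (n + 1)) c -
        Pi.single (⟨(j : ℕ), by omega⟩ : Fin (n + 1)) c := by
  funext t
  simp only [Fmap, Pi.sub_apply, Pi.single_apply, Fin.ext_iff]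
  split_ifs <;> first | (exfalso; omega) | ring

lemma Fmap_injective : Function.Injective (Fmap n r) := by
  intro x y hxy
  have h : Fmap n r (x - y) = 0 := by rw [Fmap_sub, hxy, sub_self]
  set z := x - y with hz
  have key : ∀ m, ∀ hm : m < n, z ⟨m, hm⟩ = 0 := by
    intro m
    induction m with
    | zero =>
      intro hm
      have h0 := congrFun h (⟨0, by omega⟩ : Fin (n + 1))
      rw [Fmap] at h0
      rw [dif_neg (by simp), dif_pos (by simpa using hm)] at h0
      simpa using h0
    | succ m ih =>
      intro hm
      have hs := congrFun h (⟨m + 1, by omega⟩ : Fin (n + 1))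
      rw [Fmap] at hs
      rw [dif_pos (by simp), dif_pos (by simpa using hm)] at hs
      simp only [Pi.zero_apply] at hs
      have := ih (by omega)
      rw [sub_eq_zero] at hs
      rw [← hs]
      convert this using 2
      simp
  have : z = 0 := by
    funext t
    exact key t.1 t.2
  rw [hz, sub_eq_zero] at this
  exact this



/-- the matrix of `σ` : columns are `e₀ + Fmap (σ • χ_{<t})`. -/
def Mdef (σ : Equiv.Perm (Fin n)) : Matrix (Fin (n + 1)) (Fin (n + 1)) (ZMod r) :=
  Matrix.of fun s t =>
    (if s = 0 then 1 else 0) +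
      Fmap n r (fun j => if ((σ⁻¹ j : Fin n) : ℕ) < (t : ℕ) then 1 else 0) s

lemma Mdef_mulVec_e0 (σ : Equiv.Perm (Fin n)) :
    (Mdef n r σ).mulVec (Pi.single 0 1) = Pi.single (0 : Fin (n + 1)) (1 : ZMod r) := by
  rw [Matrix.mulVec_single]
  funext s
  simp only [Mdef, Matrix.of_apply, mul_one, Pi.smul_apply, Matrix.col_apply, MulOpposite.op_one,
    one_smul]
  have hz : (fun j : Fin n =>
      if ((σ⁻¹ j : Fin n) : ℕ) < ((0 : Fin (n + 1)) : ℕ) then (1 : ZMod r) else 0) = 0 := by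
    funext j; simp
  rw [hz, Fmap_zero]
  simp [Pi.single_apply]

lemma chi_diff (σ : Equiv.Perm (Fin n)) (j : Fin n) :
    ((fun j' : Fin n => if ((σ⁻¹ j' : Fin n) : ℕ) < (j : ℕ) + 1 then (1 : ZMod r) else 0) -
        fun j' : Fin n => if ((σ⁻¹ j' : Fin n) : ℕ) < (j : ℕ) then (1 : ZMod r) else 0) =
      Pi.single (σ j) 1 := by
  funext j'
  have hiff : ((σ⁻¹ j' : Fin n) = j) ↔ j' = σ j := by
    constructor
    · intro h; rw [← h]; simp
    · rintro rfl; simp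
  simp only [Pi.sub_apply, Pi.single_apply]
  by_cases hj : j' = σ j
  · have hv : ((σ⁻¹ j' : Fin n) : ℕ) = (j : ℕ) := by rw [hiff.mpr hj]
    rw [if_pos hj, if_pos (by omega), if_neg (by omega)]
    norm_num
  · have hv : ((σ⁻¹ j' : Fin n) : ℕ) ≠ (j : ℕ) := fun hc => hj (hiff.mp (Fin.ext hc))
    rw [if_neg hj]
    split_ifs <;> first | (exfalso; omega) | ring

lemma Mdef_col_diff (σ : Equiv.Perm (Fin n)) (j : Fin n) :
    (fun s => Mdef n r σ s ⟨(j : ℕ) + 1, by omega⟩ - Mdef n r σ s ⟨(j : ℕ), by omega⟩) =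
      Fmap n r (Pi.single (σ j) 1) := by
  funext s
  simp only [Mdef, Matrix.of_apply, Fin.val_mk]
  rw [← chi_diff n r σ j, Fmap_sub]
  simp only [Pi.sub_apply]
  ring

lemma Mdef_mulVec_Fmap (σ : Equiv.Perm (Fin n)) (x : Fin n → ZMod r) :
    (Mdef n r σ).mulVec (Fmap n r x) = Fmap n r (fun j => x (σ⁻¹ j)) := by
  have base : ∀ (j : Fin n) (c : ZMod r),
      (Mdef n r σ).mulVec (Fmap n r (Pi.single j c)) =
        Fmap n r (fun j' => (Pi.single j c : Fin n → ZMod r) (σ⁻¹ j')) := by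
    intro j c
    have hc : (fun j' => (Pi.single j c : Fin n → ZMod r) (σ⁻¹ j')) = Pi.single (σ j) c := by
      funext j'
      have hiff : ((σ⁻¹ j' : Fin n) = j) ↔ j' = σ j := by
        constructor
        · intro h; rw [← h]; simp
        · rintro rfl; simp
      simp only [Pi.single_apply]
      by_cases hj : j' = σ j
      · rw [if_pos hj, if_pos (hiff.mpr hj)]
      · rw [if_neg hj, if_neg (fun hc2 => hj (hiff.mp hc2))]
    rw [hc, Fmap_single n r j c, Matrix.mulVec_sub, Matrix.mulVec_single, Matrix.mulVec_single,
      Fmap_single n r (σ j) c]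
    funext s
    have hd := congrFun (Mdef_col_diff n r σ j) s
    have he := congrFun (Fmap_single n r (σ j) (1 : ZMod r)) s
    simp only [Pi.sub_apply] at hd he ⊢
    have hc1 : ∀ i : Fin (n + 1), (Pi.single i c : Fin (n+1) → ZMod r) s = (Pi.single i 1 : Fin (n+1) → ZMod r) s * c := by
      intro i
      simp only [Pi.single_apply]
      split_ifs <;> ring
    rw [hc1, hc1]
    calc Mdef n r σ s ⟨(j : ℕ) + 1, by omega⟩ * c - Mdef n r σ s ⟨(j : ℕ), by omega⟩ * c
        = (Mdef n r σ s ⟨(j : ℕ) + 1, by omega⟩ - Mdef n r σ s ⟨(j : ℕ), by omega⟩) * c := by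
          ring
      _ = _ := by rw [hd, he]; ring
  have lin : (Matrix.mulVecLin (Mdef n r σ)).comp (FmapL n r) =
      (FmapL n r).comp (LinearMap.funLeft (ZMod r) (ZMod r) fun j => σ⁻¹ j) := by
    apply LinearMap.pi_ext
    intro j c
    simpa [FmapL, Matrix.mulVecLin_apply, LinearMap.funLeft, Function.comp_def] using base j c
  simpa [FmapL, Matrix.mulVecLin_apply, LinearMap.funLeft, Function.comp_def] using LinearMap.congr_fun lin x

lemma Mdef_mul (σ τ : Equiv.Perm (Fin n)) :
    Mdef n r (σ * τ) = Mdef n r σ * Mdef n r τ := by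
  ext s t
  have hcol : (fun u => Mdef n r τ u t) =
      Pi.single (0 : Fin (n + 1)) (1 : ZMod r) +
        Fmap n r (fun j => if ((τ⁻¹ j : Fin n) : ℕ) < (t : ℕ) then 1 else 0) := by
    funext u
    simp [Mdef, Pi.single_apply]
  have hmulv : (Mdef n r σ * Mdef n r τ) s t =
      ((Mdef n r σ).mulVec fun u => Mdef n r τ u t) s := by
    simp [Matrix.mul_apply, Matrix.mulVec, dotProduct]
  rw [hmulv, hcol, Matrix.mulVec_add, Mdef_mulVec_e0, Mdef_mulVec_Fmap]
  have harg : (fun j : Fin n =>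
        if ((τ⁻¹ (σ⁻¹ j) : Fin n) : ℕ) < (t : ℕ) then (1 : ZMod r) else 0) =
      fun j : Fin n => if (((σ * τ)⁻¹ j : Fin n) : ℕ) < (t : ℕ) then (1 : ZMod r) else 0 := by
    funext j
    simp [mul_inv_rev]
  simp only [Pi.add_apply, Mdef, Matrix.of_apply, Pi.single_apply, harg]

set_option maxHeartbeats 2000000 in
lemma Mdef_swap (k : ℕ) (hk : k + 1 < n) :
    Mdef n r (Equiv.swap (⟨k, Nat.lt_of_succ_lt hk⟩ : Fin n) ⟨k + 1, hk⟩) = Pmat n r k := by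
  ext s t
  simp only [Mdef, Matrix.of_apply, Pmat, Fmap, Equiv.swap_inv, Equiv.swap_apply_def,
    Fin.ext_iff, apply_ite Fin.val, Fin.val_mk, Fin.val_zero, hk, dite_true, if_true,
    dif_pos hk]
  split_ifs <;> first | (exfalso; omega) | ring

end S14

/-- the injective linear map `Fmap : (ℤ/rℤ)ⁿ → (ℤ/rℤ)^{n+1}`,
`e_k ↦ e_{k+1} - e_k`, intertwines the permutation action of `B_n` on `(ℤ/rℤ)ⁿ` with
the action of the matrices `M(β)` of the virtual undercrossing homomorphism
`Υ_r(β) = (M(β), v(β))`; moreover `Fmap ∘ φ_r = v`, and consequently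
`ker(φ_r) = ker(v)`. -/
theorem stmt_14 (n r : ℕ) (hn : 2 ≤ n) :
    ∃ (π : BraidGroup (n - 1) →* Equiv.Perm (Fin n))
      (φ : BraidGroup (n - 1) → (Fin n → ZMod r))
      (M : BraidGroup (n - 1) → Matrix (Fin (n + 1)) (Fin (n + 1)) (ZMod r))
      (v : BraidGroup (n - 1) → (Fin (n + 1) → ZMod r)),
      (∀ k : ℕ, ∀ hk : k + 1 < n,
        π (braidGen k) = Equiv.swap ⟨k, by omega⟩ ⟨k + 1, hk⟩) ∧
      (∀ k : ℕ, ∀ hk : k + 1 < n,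
        φ (braidGen k) = Pi.single (⟨k + 1, hk⟩ : Fin n) 1) ∧
      (∀ α β : BraidGroup (n - 1),
        φ (α * β) = φ α + fun t => φ β ((π α)⁻¹ t)) ∧
      (∀ k : ℕ, k + 1 < n → M (braidGen k) = Pmat n r k) ∧
      (∀ k : ℕ, k + 1 < n → v (braidGen k) = vvec n r k) ∧
      (∀ α β : BraidGroup (n - 1), M (α * β) = M α * M β) ∧
      (∀ α β : BraidGroup (n - 1), v (α * β) = (M α).mulVec (v β) + v α) ∧
      Function.Injective (Fmap n r) ∧
      (∀ (β : BraidGroup (n - 1)) (x : Fin n → ZMod r),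
        Fmap n r (fun t => x ((π β)⁻¹ t)) = (M β).mulVec (Fmap n r x)) ∧
      (∀ β : BraidGroup (n - 1), Fmap n r (φ β) = v β) ∧
      (∀ β : BraidGroup (n - 1), φ β = 0 ↔ v β = 0) := by
  refine ⟨(S14.SDP.projP n r).comp (S14.Theta n r),
    fun β => (S14.Theta n r β).a,
    fun β => S14.Mdef n r ((S14.Theta n r β).p),
    fun β => Fmap n r ((S14.Theta n r β).a),
    ?_, ?_, ?_, ?_, ?_, ?_, ?_, ?_, ?_, ?_, ?_⟩
  · intro k hk
    beta_reduce
    rw [MonoidHom.comp_apply, S14.Theta_gen n r k hk, S14.sgen, dif_pos hk]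
    rfl
  · intro k hk
    beta_reduce
    rw [S14.Theta_gen n r k hk, S14.sgen, dif_pos hk]
  · intro α β
    beta_reduce
    rw [map_mul]
    rfl
  · intro k hk
    beta_reduce
    rw [S14.Theta_gen n r k hk, S14.sgen, dif_pos hk]
    exact S14.Mdef_swap n r k hk
  · intro k hk
    beta_reduce
    rw [S14.Theta_gen n r k hk, S14.sgen, dif_pos hk]
    show Fmap n r (Pi.single (⟨k + 1, hk⟩ : Fin n) 1) = vvec n r k
    rw [S14.Fmap_single n r (⟨k + 1, hk⟩ : Fin n) 1, vvec, dif_pos hk]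
  · intro α β
    beta_reduce
    rw [map_mul, S14.SDP.mul_p, S14.Mdef_mul]
  · intro α β
    beta_reduce
    rw [map_mul, S14.SDP.mul_a, S14.Fmap_add, S14.Mdef_mulVec_Fmap]
    exact add_comm _ _
  · exact S14.Fmap_injective n r
  · intro β x
    beta_reduce
    exact (S14.Mdef_mulVec_Fmap n r _ x).symm
  · intro β
    beta_reduce
    rfl
  · intro β
    beta_reduce
    constructor
    · intro h
      show Fmap n r _ = 0
      rw [h, S14.Fmap_zero]
    · intro h
      apply S14.Fmap_injective n r
      rw [S14.Fmap_zero]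
      exact h
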